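/- Let N ≥ 1 and let Q be a real N×N matrix that is symmetric and positive semidefinite, satisfies Q ⬝ 𝟙 = 0 where 𝟙 is the all-ones vector, and whose kernel consists only of constant vectors (i.e., for every x ∈ ℝ^N, Q ⬝ x = 0 implies x = c·𝟙 for some real c). Let b : Fin N → ℝ with b i ≥ 0 for all i and b i₀ > 0 for at least one index i₀. Then the matrix M := Q + diagonal(b) is symmetric positive definite. -/

import Mathlib

open Matrix

/-- Lemma 1: if `Q` is the Laplacian of a connected weighted undirected graph
(symmetric, positive semidefinite, `Q 𝟙 = 0`, kernel spanned by the all-ones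
vector) and `b` has nonnegative entries with at least one positive entry, then
`M = Q + diag(b)` is symmetric positive definite. -/
theorem laplacian_plus_diagonal_posDef
    (N : ℕ) (hN : 1 ≤ N)
    (Q : Matrix (Fin N) (Fin N) ℝ)
    (hsymm : Q.IsSymm)
    (hpsd : Q.PosSemidef)
    (hrow : Q.mulVec (fun _ => (1 : ℝ)) = 0)
    (hker : ∀ x : Fin N → ℝ, Q.mulVec x = 0 → ∃ c : ℝ, ∀ i, x i = c)
    (b : Fin N → ℝ) (hb : ∀ i, 0 ≤ b i) (hb0 : ∃ i, 0 < b i) :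
    (Q + Matrix.diagonal b).IsSymm ∧ (Q + Matrix.diagonal b).PosDef := by
  have hMsymm : (Q + Matrix.diagonal b).IsSymm := by
    rw [Matrix.IsSymm, Matrix.transpose_add, hsymm, Matrix.diagonal_transpose]
  refine ⟨hMsymm, Matrix.posDef_iff_dotProduct_mulVec.mpr ⟨?_, ?_⟩⟩
  · rwa [Matrix.IsHermitian, Matrix.conjTranspose_eq_transpose_of_trivial]
  intro x hx
  have hQ : 0 ≤ star x ⬝ᵥ Q.mulVec x := hpsd.dotProduct_mulVec_nonneg x
  have hD : 0 ≤ ∑ i, b i * (x i * x i) :=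
    Finset.sum_nonneg fun i _ => mul_nonneg (hb i) (mul_self_nonneg _)
  have hexp : star x ⬝ᵥ (Q + Matrix.diagonal b).mulVec x
      = star x ⬝ᵥ Q.mulVec x + ∑ i, b i * (x i * x i) := by
    rw [Matrix.add_mulVec, dotProduct_add]
    congr 1
    simp [Matrix.mulVec_diagonal, dotProduct, mul_comm, mul_assoc, mul_left_comm]
  rcases lt_or_eq_of_le (add_nonneg hQ hD) with h | h
  · rwa [hexp]
  exfalso
  have hQ0 : star x ⬝ᵥ Q.mulVec x = 0 := le_antisymm (by linarith) hQ
  have hD0 : ∑ i, b i * (x i * x i) = 0 := by linarith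
  have hker' : Q.mulVec x = 0 := (hpsd.dotProduct_mulVec_zero_iff x).mp hQ0
  obtain ⟨c, hc⟩ := hker x hker'
  obtain ⟨i0, hi0⟩ := hb0
  have hterm : ∀ i ∈ Finset.univ, 0 ≤ b i * (x i * x i) :=
    fun i _ => mul_nonneg (hb i) (mul_self_nonneg _)
  have h0 : b i0 * (x i0 * x i0) = 0 :=
    (Finset.sum_eq_zero_iff_of_nonneg hterm).mp hD0 i0 (Finset.mem_univ i0)
  have hxi0 : x i0 = 0 := by
    rcases mul_eq_zero.mp h0 with h | h
    · exact absurd h (ne_of_gt hi0)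
    · exact (mul_self_eq_zero).mp h
  apply hx
  funext i
  rw [hc i, ← hc i0, hxi0]; rfl
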